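/- arXiv:2106.07705 — 4 statements merged into one kernel-verified Lean document; each statement's English description precedes it below -/
import Mathlib

section
/- Let p > 1, q = p/(p−1), β > 0, and let f : ℝ → ℝ be continuous with primitive F(s) = ∫₀ˢ f(t) dt. Assume: (i) there exist θ > β and s₀ > 0 such that s·f(s) ≥ θ·F(s) > 0 for all |s| > s₀ (the Ambrosetti–Rabinowitz condition), and (ii) f(s)/|s|^{p-1} → 0 as |s| → ∞. Then there exist C > 0 and s₁ ≥ s₀ such that C·|f(s)|^q ≤ s·f(s) − β·F(s) for all |s| > s₁. -/
/-- The Ambrosetti–Rabinowitz condition together with the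
quasicritical growth condition implies the paper's condition `(H₁)`:
`C * |f s|^q ≤ s * f s - β * F s` for `|s|` large, where `q = p/(p-1)`. -/
theorem stmt_6 (p q β : ℝ) (hp : 1 < p) (hq : q = p / (p - 1)) (hβ : 0 < β)
    (f : ℝ → ℝ) (hf : Continuous f)
    (F : ℝ → ℝ) (hF : ∀ s : ℝ, F s = ∫ t in (0:ℝ)..s, f t)
    (θ s₀ : ℝ) (hθ : β < θ) (hs₀ : 0 < s₀)
    (hAR : ∀ s : ℝ, s₀ < |s| → θ * F s ≤ s * f s ∧ 0 < F s)
    (hlim : ∀ δ : ℝ, 0 < δ → ∃ R : ℝ, 0 < R ∧ ∀ s : ℝ, R ≤ |s| → |f s| ≤ δ * |s| ^ (p - 1)) :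
    ∃ C : ℝ, 0 < C ∧ ∃ s₁ : ℝ, s₀ ≤ s₁ ∧
      ∀ s : ℝ, s₁ < |s| → C * |f s| ^ q ≤ s * f s - β * F s := by
  obtain ⟨R, hR, hRf⟩ := hlim 1 one_pos
  have hθ0 : 0 < θ := hβ.trans hθ
  have hp1 : 0 < p - 1 := by linarith
  have hq1 : q - 1 = 1 / (p - 1) := by rw [hq]; field_simp; ring
  refine ⟨1 - β / θ, by rw [sub_pos, div_lt_one hθ0]; exact hθ, max s₀ R,
    le_max_left _ _, ?_⟩
  intro s hs
  have hss : s₀ < |s| := lt_of_le_of_lt (le_max_left _ _) hs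
  have hRs : R ≤ |s| := le_of_lt (lt_of_le_of_lt (le_max_right _ _) hs)
  obtain ⟨hAR1, hAR2⟩ := hAR s hss
  have hsf : 0 < s * f s := lt_of_lt_of_le (mul_pos hθ0 hAR2) hAR1
  have hf0 : f s ≠ 0 := by
    intro h
    rw [h, mul_zero] at hsf
    exact lt_irrefl 0 hsf
  have hfabs : |f s| ≤ |s| ^ (p - 1) := by simpa using hRf s hRs
  have hq0 : 0 < q - 1 := by rw [hq1]; positivity
  have h1 : |f s| ^ (q - 1) ≤ |s| := by
    calc |f s| ^ (q - 1) ≤ (|s| ^ (p - 1)) ^ (q - 1) :=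
          Real.rpow_le_rpow (abs_nonneg _) hfabs hq0.le
      _ = |s| ^ ((p - 1) * (q - 1)) := (Real.rpow_mul (abs_nonneg s) _ _).symm
      _ = |s| := by
          have h : (p - 1) * (q - 1) = 1 := by
            rw [hq1]; field_simp
          rw [h, Real.rpow_one]
  have h2 : |f s| ^ q ≤ s * f s := by
    have habs0 : |f s| ≠ 0 := abs_ne_zero.mpr hf0
    have : |f s| ^ q = |f s| ^ (q - 1) * |f s| := by
      rw [← Real.rpow_add_one habs0 (q - 1)]
      ring_nf
    rw [this]
    calc |f s| ^ (q - 1) * |f s| ≤ |s| * |f s| :=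
          mul_le_mul_of_nonneg_right h1 (abs_nonneg _)
      _ = |s * f s| := (abs_mul s (f s)).symm
      _ = s * f s := abs_of_pos hsf
  have h3 : β * F s ≤ (β / θ) * (s * f s) := by
    have := mul_le_mul_of_nonneg_left hAR1 (le_of_lt (div_pos hβ hθ0))
    calc β * F s = (β / θ) * (θ * F s) := by field_simp
      _ ≤ (β / θ) * (s * f s) := this
  have hC : 0 < 1 - β / θ := by rw [sub_pos, div_lt_one hθ0]; exact hθ
  calc (1 - β / θ) * |f s| ^ q ≤ (1 - β / θ) * (s * f s) :=
        mul_le_mul_of_nonneg_left h2 hC.le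
    _ = s * f s - (β / θ) * (s * f s) := by ring
    _ ≤ s * f s - β * F s := by linarith
end

section
/- Let Ω ⊂ ℝ^N be a bounded measurable set equipped with Lebesgue measure, let p > 1, and let f : ℝ → ℝ be continuous with f(s)/|s|^{p-1} → 0 as |s| → ∞. Let K : Ω → ℝ be measurable with 0 ≤ K(x) ≤ κ for a.e. x. Let u and (u_n) be measurable functions on Ω such that ∫_Ω |u_n − u| dx → 0, sup_n ∫_Ω |u_n|^p dx < ∞, and sup_n ∫_Ω |u_n − u|^p dx < ∞. Then ∫_Ω K(x)·f(u_n(x))·(u_n(x) − u(x)) dx → 0 as n → ∞. -/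
open MeasureTheory Filter Topology
open scoped ENNReal NNReal

private lemma young_aux {p a b : ℝ} (hp : 1 ≤ p) (ha : 0 ≤ a) (hb : 0 ≤ b) :
    a ^ (p - 1) * b ≤ a ^ p + b ^ p := by
  have hap : 0 ≤ a ^ p := Real.rpow_nonneg ha p
  have hbp : 0 ≤ b ^ p := Real.rpow_nonneg hb p
  rcases le_total a b with h | h
  · rcases eq_or_lt_of_le hb with hb0 | hb'
    · have ha0 : a = 0 := le_antisymm (h.trans hb0.symm.le) ha
      have : a ^ (p - 1) * b = 0 := by rw [← hb0]; ring
      rw [this]; positivity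
    · have h1 : a ^ (p - 1) ≤ b ^ (p - 1) := Real.rpow_le_rpow ha h (by linarith)
      calc a ^ (p - 1) * b ≤ b ^ (p - 1) * b :=
            mul_le_mul_of_nonneg_right h1 hb
        _ = b ^ p := by
            rw [← Real.rpow_add_one hb'.ne' (p - 1)]; ring_nf
        _ ≤ a ^ p + b ^ p := le_add_of_nonneg_left hap
  · rcases eq_or_lt_of_le ha with ha0 | ha'
    · have hb0 : b = 0 := le_antisymm (h.trans ha0.symm.le) hb
      rw [hb0, mul_zero]; positivity
    · calc a ^ (p - 1) * b ≤ a ^ (p - 1) * a :=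
            mul_le_mul_of_nonneg_left h (Real.rpow_nonneg ha _)
        _ = a ^ p := by rw [← Real.rpow_add_one ha'.ne' (p - 1)]; ring_nf
        _ ≤ a ^ p + b ^ p := le_add_of_nonneg_right hbp

private lemma abs_le_one_add_rpow {p t : ℝ} (hp : 1 ≤ p) : |t| ≤ 1 + |t| ^ p := by
  rcases le_total |t| 1 with h | h
  · have : (0:ℝ) ≤ |t| ^ p := Real.rpow_nonneg (abs_nonneg t) p
    linarith
  · have h1 : |t| ^ (1:ℝ) ≤ |t| ^ p := Real.rpow_le_rpow_of_exponent_le h hp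
    rw [Real.rpow_one] at h1
    linarith

/-- Claim (6.4) of the paper. If `Ω ⊂ ℝ^N` is bounded measurable,
`f` continuous with `f(s)/|s|^(p-1) → 0` as `|s| → ∞`, `0 ≤ K ≤ κ` a.e.,
`∫_Ω |u_n - u| → 0` and `∫_Ω |u_n|^p`, `∫_Ω |u_n - u|^p` are uniformly bounded,
then `∫_Ω K f(u_n)(u_n - u) → 0`. -/
theorem stmt_12 (N : ℕ) (Ω : Set (Fin N → ℝ)) (hΩb : Bornology.IsBounded Ω)
    (hΩm : MeasurableSet Ω) (p : ℝ) (hp : 1 < p)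
    (f : ℝ → ℝ) (hf : Continuous f)
    (hlim : ∀ δ : ℝ, 0 < δ → ∃ R : ℝ, 0 < R ∧ ∀ s : ℝ, R ≤ |s| → |f s| ≤ δ * |s| ^ (p - 1))
    (K : (Fin N → ℝ) → ℝ) (hKm : Measurable K) (κ : ℝ)
    (hK : ∀ᵐ x ∂(volume.restrict Ω), 0 ≤ K x ∧ K x ≤ κ)
    (u : (Fin N → ℝ) → ℝ) (hum : Measurable u)
    (un : ℕ → (Fin N → ℝ) → ℝ) (hunm : ∀ n, Measurable (un n))
    (hL1 : Tendsto (fun n => ∫ x in Ω, |un n x - u x|) atTop (𝓝 0))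
    (hbd : (⨆ n, ∫⁻ x in Ω, ENNReal.ofReal (|un n x| ^ p)) < ⊤)
    (hbd' : (⨆ n, ∫⁻ x in Ω, ENNReal.ofReal (|un n x - u x| ^ p)) < ⊤) :
    Tendsto (fun n => ∫ x in Ω, K x * (f (un n x) * (un n x - u x))) atTop (𝓝 0) := by
  set μ := volume.restrict Ω with hμdef
  -- the measure of Ω is finite
  have hμΩ : μ Set.univ < ⊤ := by
    rw [hμdef, Measure.restrict_apply_univ]
    exact hΩb.measure_lt_top
  set S : ℝ≥0∞ := ⨆ n, ∫⁻ x in Ω, ENNReal.ofReal (|un n x| ^ p) with hSdef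
  set S' : ℝ≥0∞ := ⨆ n, ∫⁻ x in Ω, ENNReal.ofReal (|un n x - u x| ^ p) with hS'def
  have hSn : ∀ n, (∫⁻ x in Ω, ENNReal.ofReal (|un n x| ^ p)) ≤ S := fun n =>
    le_iSup (fun n => ∫⁻ x in Ω, ENNReal.ofReal (|un n x| ^ p)) n
  have hS'n : ∀ n, (∫⁻ x in Ω, ENNReal.ofReal (|un n x - u x| ^ p)) ≤ S' := fun n =>
    le_iSup (fun n => ∫⁻ x in Ω, ENNReal.ofReal (|un n x - u x| ^ p)) n
  set κ' : ℝ := max κ 0 with hκ'def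
  have hκ'0 : 0 ≤ κ' := le_max_right _ _
  set M : ℝ := S.toReal with hMdef
  set M' : ℝ := S'.toReal with hM'def
  have hM0 : 0 ≤ M := ENNReal.toReal_nonneg
  have hM'0 : 0 ≤ M' := ENNReal.toReal_nonneg
  -- T n := L¹-distance as a lintegral; it is finite
  set T : ℕ → ℝ≥0∞ := fun n => ∫⁻ x in Ω, ENNReal.ofReal |un n x - u x| with hTdef
  have hvm : ∀ n, Measurable (fun x => un n x - u x) := fun n => (hunm n).sub hum
  have hTfin : ∀ n, T n < ⊤ := by
    intro n
    have hb1 : T n ≤ ∫⁻ x in Ω, (1 + ENNReal.ofReal (|un n x - u x| ^ p)) := by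
      apply lintegral_mono
      intro x
      calc ENNReal.ofReal |un n x - u x|
          ≤ ENNReal.ofReal (1 + |un n x - u x| ^ p) :=
            ENNReal.ofReal_le_ofReal (abs_le_one_add_rpow hp.le)
        _ = ENNReal.ofReal 1 + ENNReal.ofReal (|un n x - u x| ^ p) :=
            ENNReal.ofReal_add zero_le_one (Real.rpow_nonneg (abs_nonneg _) p)
        _ = 1 + ENNReal.ofReal (|un n x - u x| ^ p) := by rw [ENNReal.ofReal_one]
    have hb2 : (∫⁻ x in Ω, (1 + ENNReal.ofReal (|un n x - u x| ^ p)))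
        = μ Set.univ + ∫⁻ x in Ω, ENNReal.ofReal (|un n x - u x| ^ p) := by
      rw [lintegral_add_left measurable_const, lintegral_const, one_mul]
    refine lt_of_le_of_lt (hb1.trans_eq hb2) ?_
    exact ENNReal.add_lt_top.2 ⟨hμΩ, lt_of_le_of_lt (hS'n n) hbd'⟩
  -- (T n).toReal is the L¹ distance, which tends to 0
  have hTeq : ∀ n, ∫ x in Ω, |un n x - u x| = (T n).toReal := fun n =>
    integral_eq_lintegral_of_nonneg_ae (ae_of_all _ fun x => abs_nonneg _)
      (hvm n).abs.aestronglyMeasurable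
  have hTt : Tendsto (fun n => (T n).toReal) atTop (𝓝 0) := hL1.congr hTeq
  have hT0 : ∀ n, 0 ≤ (T n).toReal := fun n => ENNReal.toReal_nonneg
  -- main estimate
  rw [Metric.tendsto_atTop]
  intro ε hε
  set A : ℝ := κ' * (M + M') with hAdef
  have hA0 : 0 ≤ A := by positivity
  set δ : ℝ := ε / (2 * (A + 1)) with hδdef
  have hδ : 0 < δ := by positivity
  obtain ⟨R, hR, hfR⟩ := hlim δ hδ
  -- a uniform bound for f on [-R, R]
  obtain ⟨C, hC⟩ : ∃ C : ℝ, ∀ s : ℝ, |s| ≤ R → |f s| ≤ C := by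
    obtain ⟨x0, -, hx0⟩ := isCompact_Icc.exists_isMaxOn
      (Set.nonempty_Icc.2 (by linarith : -R ≤ R)) (hf.abs.continuousOn)
    exact ⟨|f x0|, fun s hs => hx0 (abs_le.mp hs)⟩
  set C' : ℝ := max C 0 with hC'def
  have hC'0 : 0 ≤ C' := le_max_right _ _
  have hfbound : ∀ s : ℝ, |f s| ≤ δ * |s| ^ (p - 1) + C' := by
    intro s
    rcases le_total R |s| with h | h
    · have := hfR s h
      have h2 : (0:ℝ) ≤ C' := hC'0
      linarith
    · have := (hC s h).trans (le_max_left C 0)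
      have h2 : (0:ℝ) ≤ δ * |s| ^ (p - 1) := by positivity
      linarith
  -- pointwise a.e. bound
  have hae : ∀ n, ∀ᵐ x ∂μ, |K x * (f (un n x) * (un n x - u x))|
      ≤ κ' * (δ * (|un n x| ^ p + |un n x - u x| ^ p) + C' * |un n x - u x|) := by
    intro n
    filter_upwards [hK] with x hx
    obtain ⟨hK0, hKκ⟩ := hx
    set s := un n x
    set t := un n x - u x
    have h1 : |f s * t| ≤ δ * (|s| ^ p + |t| ^ p) + C' * |t| := by
      have hy : |s| ^ (p - 1) * |t| ≤ |s| ^ p + |t| ^ p :=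
        young_aux hp.le (abs_nonneg s) (abs_nonneg t)
      calc |f s * t| = |f s| * |t| := abs_mul _ _
        _ ≤ (δ * |s| ^ (p - 1) + C') * |t| :=
            mul_le_mul_of_nonneg_right (hfbound s) (abs_nonneg t)
        _ = δ * (|s| ^ (p - 1) * |t|) + C' * |t| := by ring
        _ ≤ δ * (|s| ^ p + |t| ^ p) + C' * |t| := by
            have := mul_le_mul_of_nonneg_left hy hδ.le
            linarith
    have h2 : |K x| ≤ κ' := by
      rw [abs_of_nonneg hK0]; exact hKκ.trans (le_max_left κ 0)
    calc |K x * (f s * t)| = |K x| * |f s * t| := abs_mul _ _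
      _ ≤ κ' * (δ * (|s| ^ p + |t| ^ p) + C' * |t|) :=
          mul_le_mul h2 h1 (abs_nonneg _) hκ'0
  -- lintegral bound
  have key : ∀ n, (∫⁻ x in Ω, ENNReal.ofReal ‖K x * (f (un n x) * (un n x - u x))‖)
      ≤ ENNReal.ofReal κ' * (ENNReal.ofReal δ * (S + S') + ENNReal.ofReal C' * T n) := by
    intro n
    have hmeas1 : Measurable (fun x => ENNReal.ofReal (|un n x| ^ p)) :=
      ((hunm n).abs.pow measurable_const).ennreal_ofReal
    have hmeas2 : Measurable (fun x => ENNReal.ofReal (|un n x - u x| ^ p)) :=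
      ((hvm n).abs.pow measurable_const).ennreal_ofReal
    calc (∫⁻ x in Ω, ENNReal.ofReal ‖K x * (f (un n x) * (un n x - u x))‖)
        ≤ ∫⁻ x in Ω, ENNReal.ofReal κ' *
            (ENNReal.ofReal δ * (ENNReal.ofReal (|un n x| ^ p)
              + ENNReal.ofReal (|un n x - u x| ^ p))
             + ENNReal.ofReal C' * ENNReal.ofReal |un n x - u x|) := by
          apply lintegral_mono_ae
          filter_upwards [hae n] with x hx
          rw [Real.norm_eq_abs]
          refine le_trans (ENNReal.ofReal_le_ofReal hx) (le_of_eq ?_)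
          rw [ENNReal.ofReal_mul hκ'0,
            ENNReal.ofReal_add (by positivity) (by positivity),
            ENNReal.ofReal_mul hδ.le,
            ENNReal.ofReal_add (by positivity) (by positivity),
            ENNReal.ofReal_mul hC'0]
      _ = ENNReal.ofReal κ' * (ENNReal.ofReal δ *
            ((∫⁻ x in Ω, ENNReal.ofReal (|un n x| ^ p))
              + (∫⁻ x in Ω, ENNReal.ofReal (|un n x - u x| ^ p)))
           + ENNReal.ofReal C' * T n) := by
          rw [lintegral_const_mul' _ _ ENNReal.ofReal_ne_top]
          congr 1
          rw [lintegral_add_left (f := fun x => ENNReal.ofReal δ * (ENNReal.ofReal (|un n x| ^ p) + ENNReal.ofReal (|un n x - u x| ^ p))) ((hmeas1.add hmeas2).const_mul _)]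
          congr 1
          · rw [lintegral_const_mul' _ _ ENNReal.ofReal_ne_top,
              lintegral_add_left hmeas1]
          · rw [lintegral_const_mul' _ _ ENNReal.ofReal_ne_top]
      _ ≤ ENNReal.ofReal κ' * (ENNReal.ofReal δ * (S + S') + ENNReal.ofReal C' * T n) := by
          gcongr
          · exact hSn n
          · exact hS'n n
  -- convert to a real bound
  have hreal : ∀ n, |∫ x in Ω, K x * (f (un n x) * (un n x - u x))|
      ≤ κ' * (δ * (M + M') + C' * (T n).toReal) := by
    intro n
    have h0 := norm_integral_le_lintegral_norm (μ := μ)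
      (f := fun x => K x * (f (un n x) * (un n x - u x)))
    rw [Real.norm_eq_abs] at h0
    refine h0.trans ?_
    have hSS' : S + S' ≠ ⊤ := (ENNReal.add_lt_top.2 ⟨hbd, hbd'⟩).ne
    have hfin : ENNReal.ofReal κ' * (ENNReal.ofReal δ * (S + S')
        + ENNReal.ofReal C' * T n) ≠ ⊤ := by
      apply ENNReal.mul_ne_top ENNReal.ofReal_ne_top
      exact ENNReal.add_ne_top.2 ⟨ENNReal.mul_ne_top ENNReal.ofReal_ne_top hSS',
        ENNReal.mul_ne_top ENNReal.ofReal_ne_top (hTfin n).ne⟩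
    calc (∫⁻ x in Ω, ENNReal.ofReal ‖K x * (f (un n x) * (un n x - u x))‖).toReal
        ≤ (ENNReal.ofReal κ' * (ENNReal.ofReal δ * (S + S')
            + ENNReal.ofReal C' * T n)).toReal := ENNReal.toReal_mono hfin (key n)
      _ = κ' * (δ * (M + M') + C' * (T n).toReal) := by
          rw [ENNReal.toReal_mul, ENNReal.toReal_add
              (ENNReal.mul_ne_top ENNReal.ofReal_ne_top hSS')
              (ENNReal.mul_ne_top ENNReal.ofReal_ne_top (hTfin n).ne),
            ENNReal.toReal_mul, ENNReal.toReal_mul,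
            ENNReal.toReal_add hbd.ne hbd'.ne,
            ENNReal.toReal_ofReal hκ'0, ENNReal.toReal_ofReal hδ.le,
            ENNReal.toReal_ofReal hC'0]
  -- choose N using hTt
  set B : ℝ := κ' * C' with hBdef
  have hB0 : 0 ≤ B := by positivity
  have hε2 : (0:ℝ) < ε / (2 * (B + 1)) := by positivity
  obtain ⟨N0, hN0⟩ := (Metric.tendsto_atTop.mp hTt) (ε / (2 * (B + 1))) hε2
  refine ⟨N0, fun n hn => ?_⟩
  rw [Real.dist_eq, sub_zero]
  have htn : (T n).toReal < ε / (2 * (B + 1)) := by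
    have := hN0 n hn
    rwa [Real.dist_eq, sub_zero, abs_of_nonneg (hT0 n)] at this
  have h1 : κ' * (δ * (M + M')) < ε / 2 := by
    have hAδ : κ' * (δ * (M + M')) = A * δ := by rw [hAdef]; ring
    rw [hAδ, hδdef, ← mul_div_assoc,
      div_lt_div_iff₀ (by positivity : (0:ℝ) < 2 * (A + 1)) two_pos]
    nlinarith
  have h2 : κ' * (C' * (T n).toReal) < ε / 2 := by
    have hBt : κ' * (C' * (T n).toReal) = B * (T n).toReal := by rw [hBdef]; ring
    rw [hBt]
    have hB1 : (0:ℝ) < B + 1 := by linarith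
    have hb : B * (T n).toReal ≤ B * (ε / (2 * (B + 1))) :=
      mul_le_mul_of_nonneg_left htn.le hB0
    have hlt : B * (ε / (2 * (B + 1))) < ε / 2 := by
      rw [mul_div_assoc', div_lt_div_iff₀ (by positivity) (by norm_num : (0:ℝ) < 2)]
      nlinarith
    linarith
  calc |∫ x in Ω, K x * (f (un n x) * (un n x - u x))|
      ≤ κ' * (δ * (M + M') + C' * (T n).toReal) := hreal n
    _ = κ' * (δ * (M + M')) + κ' * (C' * (T n).toReal) := by ring
    _ < ε / 2 + ε / 2 := add_lt_add h1 h2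
    _ = ε := add_halves ε
end

section
/- Let 1 < β < p and q ≥ 1 be real numbers, define f(s) = s^{β-1}·(log s)^q for s ≥ 1, and let F(s) = ∫₁ˢ f(t) dt. Then there exist C > 0 and s₀ > 1 such that C·(f(s))^{p/(p-1)} ≤ s·f(s) − β·F(s) for all s ≥ s₀. -/
open Real Set Filter MeasureTheory

/-- derivative of `s ^ c * (log s) ^ d` at `x > 1`. -/
lemma stmt16_aux_deriv (c d x : ℝ) (hx : 1 < x) :
    HasDerivAt (fun s : ℝ => s ^ c * Real.log s ^ d)
      (c * x ^ (c - 1) * Real.log x ^ d + d * (x ^ (c - 1) * Real.log x ^ (d - 1))) x := by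
  have hx0 : 0 < x := lt_trans one_pos hx
  have hlx : 0 < Real.log x := Real.log_pos hx
  have h1 : HasDerivAt (fun s : ℝ => s ^ c) (c * x ^ (c - 1)) x :=
    Real.hasDerivAt_rpow_const (Or.inl hx0.ne')
  have h2 : HasDerivAt (fun s : ℝ => Real.log s ^ d) (d * Real.log x ^ (d - 1) * x⁻¹) x := by
    have hout : HasDerivAt (fun y : ℝ => y ^ d) (d * Real.log x ^ (d - 1)) (Real.log x) :=
      Real.hasDerivAt_rpow_const (Or.inl hlx.ne')
    exact hout.comp x (Real.hasDerivAt_log hx0.ne')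
  have h := h1.mul h2
  refine h.congr_deriv ?_
  have hxc : x ^ c * x⁻¹ = x ^ (c - 1) := by
    rw [Real.rpow_sub hx0, Real.rpow_one, div_eq_mul_inv]
  rw [← hxc]; ring

/-- continuity of `s ^ c * (log s) ^ d` at `x > 0`, for `d ≥ 0`. -/
lemma stmt16_aux_cont (c d x : ℝ) (hd : 0 ≤ d) (hx : 0 < x) :
    ContinuousAt (fun s : ℝ => s ^ c * Real.log s ^ d) x := by
  have h1 : ContinuousAt (fun s : ℝ => s ^ c) x :=
    Real.continuousAt_rpow_const x c (Or.inl hx.ne')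
  have h2 : ContinuousAt (fun s : ℝ => Real.log s ^ d) x :=
    (Real.continuousAt_rpow_const (Real.log x) d (Or.inr hd)).comp
      (Real.continuousAt_log hx.ne')
  exact h1.mul h2

/-- For `1 < β < p`, `q ≥ 1`, `f(s) = s^(β-1) (log s)^q` on
`[1,∞)` and `F(s) = ∫ t in 1..s, f t`, there exist `C > 0` and `s₀ > 1` with
`C * f(s)^(p/(p-1)) ≤ s f(s) - β F(s)` for all `s ≥ s₀` (the paper's
condition `(H₁)` for the model nonlinearity). -/
theorem stmt_16 (β p q : ℝ) (hβ : 1 < β) (hβp : β < p) (hq : 1 ≤ q)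
    (f : ℝ → ℝ) (hf : ∀ s : ℝ, 1 ≤ s → f s = s ^ (β - 1) * Real.log s ^ q)
    (F : ℝ → ℝ) (hF : ∀ s : ℝ, F s = ∫ t in (1:ℝ)..s, t ^ (β - 1) * Real.log t ^ q) :
    ∃ C : ℝ, 0 < C ∧ ∃ s₀ : ℝ, 1 < s₀ ∧
      ∀ s : ℝ, s₀ ≤ s → C * f s ^ (p / (p - 1)) ≤ s * f s - β * F s := by
  have hp1 : 1 < p := hβ.trans hβp
  have hpm : 0 < p - 1 := by linarith
  set p' : ℝ := p / (p - 1) with hp'def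
  have hp'1 : 1 < p' := (one_lt_div hpm).mpr (by linarith)
  have hq0 : 0 < q := by linarith
  set a : ℝ := (β - 1) * p' with hadef
  set b : ℝ := q * p' with hbdef
  have ha0 : 0 < a := mul_pos (by linarith) (by linarith)
  have hb0 : 0 < b := mul_pos hq0 (by linarith)
  have haβ : a < β := by
    rw [hadef, hp'def, mul_div_assoc', div_lt_iff₀ hpm]
    nlinarith
  have hbq : q - 1 < b := by nlinarith
  -- the integrand
  set g : ℝ → ℝ := fun t => t ^ (β - 1) * Real.log t ^ q with hgdef
  have hgc : ∀ t : ℝ, 0 < t → ContinuousAt g t := fun t ht =>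
    stmt16_aux_cont (β - 1) q t hq0.le ht
  have hgint : ∀ s : ℝ, 1 ≤ s → IntervalIntegrable g MeasureTheory.volume 1 s := by
    intro s hs
    apply ContinuousOn.intervalIntegrable
    intro t ht
    rw [uIcc_of_le hs] at ht
    exact (hgc t (by linarith [ht.1])).continuousWithinAt
  -- F has derivative g on (1, ∞)
  have hFeq : F = fun u => ∫ t in (1:ℝ)..u, g t := funext hF
  have hFd : ∀ s : ℝ, 1 < s → HasDerivAt F (g s) s := by
    intro s hs
    rw [hFeq]
    exact intervalIntegral.integral_hasDerivAt_right (hgint s hs.le)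
      (ContinuousAt.stronglyMeasurableAtFilter isOpen_Ioi (fun x hx => hgc x hx) s
        (by simp only [mem_Ioi]; linarith))
      (hgc s (by linarith))
  -- G and its derivative
  set G : ℝ → ℝ := fun s => s ^ β * Real.log s ^ q - β * F s with hGdef
  have hGd : ∀ s : ℝ, 1 < s →
      HasDerivAt G (q * (s ^ (β - 1) * Real.log s ^ (q - 1))) s := by
    intro s hs
    have h1 := stmt16_aux_deriv β q s hs
    have h2 := (hFd s hs).const_mul β
    have h := h1.sub h2
    refine h.congr_deriv ?_
    simp only [hgdef]
    ring
  -- choose s₀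
  obtain ⟨s₀, hs₀3, hbound⟩ : ∃ s₀ : ℝ, 3 ≤ s₀ ∧ ∀ s, s₀ ≤ s →
      Real.log s ^ (b - (q - 1)) ≤ s ^ (β - a) := by
    have hδ : 0 < β - a := by linarith
    have hlo := isLittleO_log_rpow_rpow_atTop (b - (q - 1)) hδ
    have hev := hlo.bound one_pos
    rw [Filter.eventually_atTop] at hev
    obtain ⟨N, hN⟩ := hev
    refine ⟨max N 3, le_max_right _ _, fun s hs => ?_⟩
    have h := hN s (le_trans (le_max_left _ _) hs)
    have hs3 : (3:ℝ) ≤ s := le_trans (le_max_right _ _) hs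
    have hs0 : (0:ℝ) < s := by linarith
    calc Real.log s ^ (b - (q - 1)) ≤ ‖Real.log s ^ (b - (q - 1))‖ := le_abs_self _
      _ ≤ 1 * ‖s ^ (β - a)‖ := h
      _ = s ^ (β - a) := by
          rw [one_mul, Real.norm_eq_abs, abs_of_nonneg (Real.rpow_nonneg hs0.le _)]
  have hs₀1 : 1 < s₀ := by linarith
  have hs₀0 : 0 < s₀ := by linarith
  have hlog1 : ∀ s : ℝ, s₀ ≤ s → 1 ≤ Real.log s := by
    intro s hs
    rw [Real.le_log_iff_exp_le (by linarith)]
    have := Real.exp_one_lt_d9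
    linarith
  -- continuity of G on [1, s₀]
  have hGc : ContinuousOn G (Icc 1 s₀) := by
    have hFc : ContinuousOn F (Icc 1 s₀) := by
      rw [hFeq]
      have hgI : MeasureTheory.IntegrableOn g (uIcc (1:ℝ) s₀) := by
        rw [uIcc_of_le hs₀1.le]
        apply ContinuousOn.integrableOn_Icc
        intro t ht
        exact (hgc t (by linarith [ht.1])).continuousWithinAt
      have := intervalIntegral.continuousOn_primitive_interval hgI
      rwa [uIcc_of_le hs₀1.le] at this
    have h1 : ContinuousOn (fun s : ℝ => s ^ β * Real.log s ^ q) (Icc 1 s₀) := by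
      intro t ht
      exact (stmt16_aux_cont β q t hq0.le (by linarith [ht.1])).continuousWithinAt
    exact h1.sub (continuousOn_const.mul hFc)
  -- G is positive at s₀
  have hG1 : G 1 = 0 := by
    simp [hGdef, hFeq, Real.log_one, Real.zero_rpow hq0.ne', intervalIntegral.integral_same]
  have hGmono : StrictMonoOn G (Icc 1 s₀) := by
    apply strictMonoOn_of_deriv_pos (convex_Icc 1 s₀) hGc
    intro x hx
    rw [interior_Icc] at hx
    rw [(hGd x hx.1).deriv]
    have hx0 : 0 < x := by linarith [hx.1]
    exact mul_pos hq0 (mul_pos (Real.rpow_pos_of_pos hx0 _)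
      (Real.rpow_pos_of_pos (Real.log_pos hx.1) _))
  have hGs₀ : 0 < G s₀ := by
    have := hGmono (left_mem_Icc.mpr hs₀1.le) (right_mem_Icc.mpr hs₀1.le) hs₀1
    rwa [hG1] at this
  -- the constant
  have hH₀pos : 0 < s₀ ^ a * Real.log s₀ ^ b :=
    mul_pos (Real.rpow_pos_of_pos hs₀0 _) (Real.rpow_pos_of_pos (Real.log_pos hs₀1) _)
  set C : ℝ := min (q / (a + b)) (G s₀ / (s₀ ^ a * Real.log s₀ ^ b)) with hCdef
  have hC0 : 0 < C := lt_min (div_pos hq0 (by linarith)) (div_pos hGs₀ hH₀pos)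
  have hCK : C * (a + b) ≤ q := by
    have h := min_le_left (q / (a + b)) (G s₀ / (s₀ ^ a * Real.log s₀ ^ b))
    calc C * (a + b) ≤ q / (a + b) * (a + b) :=
          mul_le_mul_of_nonneg_right h (by linarith)
      _ = q := by field_simp
  -- monotonicity of G - C·H₀ on [s₀, ∞)
  have hmono2 : MonotoneOn (fun s : ℝ => G s - C * (s ^ a * Real.log s ^ b)) (Ici s₀) := by
    apply monotoneOn_of_deriv_nonneg (convex_Ici s₀)
    · intro x hx
      have hx1 : 1 < x := lt_of_lt_of_le hs₀1 hx
      exact ((hGd x hx1).sub ((stmt16_aux_deriv a b x hx1).const_mul C)).continuousAt.continuousWithinAt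
    · intro x hx
      rw [interior_Ici] at hx
      have hx1 : 1 < x := lt_trans hs₀1 hx
      exact ((hGd x hx1).sub
        ((stmt16_aux_deriv a b x hx1).const_mul C)).differentiableAt.differentiableWithinAt
    · intro x hx
      rw [interior_Ici] at hx
      have hx1 : 1 < x := lt_trans hs₀1 hx
      have hx0 : 0 < x := lt_trans one_pos hx1
      rw [HasDerivAt.deriv (f := fun s => G s - C * (s ^ a * Real.log s ^ b)) ((hGd x hx1).sub ((stmt16_aux_deriv a b x hx1).const_mul C))]
      rw [sub_nonneg]
      set L : ℝ := Real.log x with hLdef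
      have hL1 : 1 ≤ L := hlog1 x hx.le
      have hL0 : 0 < L := lt_of_lt_of_le one_pos hL1
      have hP1 : (0:ℝ) ≤ x ^ (a - 1) := (Real.rpow_pos_of_pos hx0 _).le
      have hP2 : (0:ℝ) ≤ L ^ (q - 1) := (Real.rpow_pos_of_pos hL0 _).le
      have e1 : x ^ (a - 1) * x ^ (β - a) = x ^ (β - 1) := by
        rw [← Real.rpow_add hx0]; congr 1; ring
      have e2 : L ^ (q - 1) * L ^ (b - (q - 1)) = L ^ b := by
        rw [← Real.rpow_add hL0]; congr 1; ring
      have h1 : L ^ (b - 1) ≤ L ^ b :=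
        Real.rpow_le_rpow_of_exponent_le hL1 (by linarith)
      have h4 : L ^ (b - (q - 1)) ≤ x ^ (β - a) := hbound x hx.le
      have step1 : C * (a * x ^ (a - 1) * L ^ b + b * (x ^ (a - 1) * L ^ (b - 1)))
          ≤ C * (a + b) * (x ^ (a - 1) * L ^ b) := by
        have h5 : b * (x ^ (a - 1) * L ^ (b - 1)) ≤ b * (x ^ (a - 1) * L ^ b) :=
          mul_le_mul_of_nonneg_left (mul_le_mul_of_nonneg_left h1 hP1) hb0.le
        have h6 : a * x ^ (a - 1) * L ^ b + b * (x ^ (a - 1) * L ^ (b - 1))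
            ≤ (a + b) * (x ^ (a - 1) * L ^ b) := by linarith [h5]
        calc C * (a * x ^ (a - 1) * L ^ b + b * (x ^ (a - 1) * L ^ (b - 1)))
            ≤ C * ((a + b) * (x ^ (a - 1) * L ^ b)) := mul_le_mul_of_nonneg_left h6 hC0.le
          _ = C * (a + b) * (x ^ (a - 1) * L ^ b) := by ring
      have step2 : C * (a + b) * (x ^ (a - 1) * L ^ b) ≤ q * (x ^ (β - 1) * L ^ (q - 1)) := by
        have hCK0 : 0 ≤ C * (a + b) := by
          have : (0:ℝ) < a + b := by linarith
          exact (mul_pos hC0 this).le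
        have hmain : x ^ (a - 1) * L ^ b ≤ x ^ (β - 1) * L ^ (q - 1) := by
          calc x ^ (a - 1) * L ^ b
              = x ^ (a - 1) * L ^ (q - 1) * L ^ (b - (q - 1)) := by rw [← e2]; ring
            _ ≤ x ^ (a - 1) * L ^ (q - 1) * x ^ (β - a) :=
                mul_le_mul_of_nonneg_left h4 (mul_nonneg hP1 hP2)
            _ = x ^ (β - 1) * L ^ (q - 1) := by rw [← e1]; ring
        calc C * (a + b) * (x ^ (a - 1) * L ^ b)
            ≤ C * (a + b) * (x ^ (β - 1) * L ^ (q - 1)) :=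
              mul_le_mul_of_nonneg_left hmain hCK0
          _ ≤ q * (x ^ (β - 1) * L ^ (q - 1)) :=
              mul_le_mul_of_nonneg_right hCK
                (mul_nonneg (Real.rpow_pos_of_pos hx0 _).le hP2)
      linarith [step1, step2]
  -- conclusion
  refine ⟨C, hC0, s₀, hs₀1, fun s hs => ?_⟩
  have hs1 : 1 < s := lt_of_lt_of_le hs₀1 hs
  have hs0 : 0 < s := lt_trans one_pos hs1
  have hL0 : 0 < Real.log s := Real.log_pos hs1
  have hm := hmono2 (self_mem_Ici) (mem_Ici.mpr hs) hs
  simp only at hm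
  have hinit : C * (s₀ ^ a * Real.log s₀ ^ b) ≤ G s₀ := by
    have h := min_le_right (q / (a + b)) (G s₀ / (s₀ ^ a * Real.log s₀ ^ b))
    rw [le_div_iff₀ hH₀pos] at h
    exact h
  have key : C * (s ^ a * Real.log s ^ b) ≤ G s := by linarith
  rw [hf s hs1.le]
  have e3 : (s ^ (β - 1) * Real.log s ^ q) ^ p' = s ^ a * Real.log s ^ b := by
    rw [Real.mul_rpow (Real.rpow_nonneg hs0.le _) (Real.rpow_nonneg hL0.le _),
      ← Real.rpow_mul hs0.le, ← Real.rpow_mul hL0.le]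
  have e4 : s ^ β = s * s ^ (β - 1) := by
    have h := Real.rpow_add hs0 1 (β - 1)
    rw [Real.rpow_one] at h
    rw [← h]; congr 1; ring
  calc C * (s ^ (β - 1) * Real.log s ^ q) ^ p' = C * (s ^ a * Real.log s ^ b) := by rw [e3]
    _ ≤ G s := key
    _ = s * (s ^ (β - 1) * Real.log s ^ q) - β * F s := by
        simp only [hGdef]; rw [e4]; ring
end

section
/- Let 1 < γ₁ < γ₂ and define M : [0,∞) → [0,∞) by M(τ) = τ^{γ₂-1} for 0 ≤ τ ≤ 1 and M(τ) = τ^{γ₁-1} for τ ≥ 1, with M̂(τ) = ∫₀^τ M(z) dz. Then: (i) M is continuous; (ii) for every γ with γ₁ < γ there exists τ₀ ≥ 1 such that τ·M(τ) ≤ γ·M̂(τ) for all τ ≥ τ₀; and (iii) for every γ < γ₂ and every τ with 0 < τ ≤ 1 one has τ·M(τ) > γ·M̂(τ). -/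
open Set intervalIntegral

/-- The degenerate Kirchhoff function equal to `τ^(γ₂-1)` on
`[0,1]` and `τ^(γ₁-1)` on `[1,∞)` (with `1 < γ₁ < γ₂`): (i) is continuous on
`[0,∞)`; (ii) satisfies the relaxed condition `(M₁)` for every `γ > γ₁`
(with some `τ₀ ≥ 1`); (iii) fails the global inequality `τ M(τ) ≤ γ M̂(τ)`
on `(0,1]` for every `γ < γ₂`. -/
theorem stmt_18 (γ₁ γ₂ : ℝ) (hγ₁ : 1 < γ₁) (hγ : γ₁ < γ₂)
    (M Mhat : ℝ → ℝ)
    (hM1 : ∀ τ : ℝ, 0 ≤ τ → τ ≤ 1 → M τ = τ ^ (γ₂ - 1))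
    (hM2 : ∀ τ : ℝ, 1 ≤ τ → M τ = τ ^ (γ₁ - 1))
    (hMhat : ∀ τ : ℝ, 0 ≤ τ → Mhat τ = ∫ z in (0:ℝ)..τ, M z) :
    ContinuousOn M (Set.Ici (0:ℝ)) ∧
    (∀ γ : ℝ, γ₁ < γ → ∃ τ₀ : ℝ, 1 ≤ τ₀ ∧ ∀ τ : ℝ, τ₀ ≤ τ → τ * M τ ≤ γ * Mhat τ) ∧
    (∀ γ : ℝ, γ < γ₂ → ∀ τ : ℝ, 0 < τ → τ ≤ 1 → γ * Mhat τ < τ * M τ) := by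
  have hγ₂1 : 1 < γ₂ := hγ₁.trans hγ
  have hγ₁0 : (0:ℝ) < γ₁ := by linarith
  have hγ₂0 : (0:ℝ) < γ₂ := by linarith
  -- continuity on the two pieces
  have h1 : ContinuousOn M (Icc (0:ℝ) 1) := by
    have hf : ContinuousOn (fun t : ℝ => t ^ (γ₂ - 1)) (Icc (0:ℝ) 1) :=
      continuousOn_id.rpow_const (fun x _ => Or.inr (by linarith))
    exact hf.congr fun x hx => hM1 x hx.1 hx.2
  have h2 : ContinuousOn M (Ici (1:ℝ)) := by
    have hf : ContinuousOn (fun t : ℝ => t ^ (γ₁ - 1)) (Ici (1:ℝ)) :=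
      continuousOn_id.rpow_const (fun x _ => Or.inr (by linarith))
    exact hf.congr fun x hx => hM2 x hx
  have hcont : ContinuousOn M (Set.Ici (0:ℝ)) := by
    intro x hx
    have hA : ContinuousWithinAt M (Icc (0:ℝ) 1) x := by
      by_cases h : x ≤ 1
      · exact h1 x ⟨hx, h⟩
      · refine continuousWithinAt_of_notMem_closure ?_
        rw [closure_Icc]
        exact fun hc => h hc.2
    have hB : ContinuousWithinAt M (Ici (1:ℝ)) x := by
      by_cases h : 1 ≤ x
      · exact h2 x h
      · refine continuousWithinAt_of_notMem_closure ?_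
        rw [closure_Ici]
        exact h
    refine (hA.union hB).mono fun y hy => ?_
    rcases le_total y 1 with h | h
    · exact Or.inl ⟨hy, h⟩
    · exact Or.inr h
  -- integrability
  have hint1 : IntervalIntegrable M MeasureTheory.volume 0 1 := by
    apply ContinuousOn.intervalIntegrable
    rwa [Set.uIcc_of_le (by norm_num : (0:ℝ) ≤ 1)]
  have hint2 : ∀ τ : ℝ, 1 ≤ τ → IntervalIntegrable M MeasureTheory.volume 1 τ := by
    intro τ hτ
    apply ContinuousOn.intervalIntegrable
    rw [Set.uIcc_of_le hτ]
    exact h2.mono fun y hy => hy.1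
  -- integral of first piece
  have I1 : (∫ z in (0:ℝ)..1, M z) = 1 / γ₂ := by
    rw [intervalIntegral.integral_congr (g := fun z : ℝ => z ^ (γ₂ - 1))
      (by
        intro z hz
        rw [Set.uIcc_of_le (by norm_num : (0:ℝ) ≤ 1)] at hz
        exact hM1 z hz.1 hz.2)]
    rw [integral_rpow (Or.inl (by linarith))]
    rw [Real.one_rpow, Real.zero_rpow (by linarith), sub_add_cancel, sub_zero]
  -- Mhat on (0,1]
  have hMhat_small : ∀ τ : ℝ, 0 < τ → τ ≤ 1 → Mhat τ = τ ^ γ₂ / γ₂ := by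
    intro τ hτ0 hτ1
    rw [hMhat τ hτ0.le]
    rw [intervalIntegral.integral_congr (g := fun z : ℝ => z ^ (γ₂ - 1))
      (by
        intro z hz
        rw [Set.uIcc_of_le hτ0.le] at hz
        exact hM1 z hz.1 (hz.2.trans hτ1))]
    rw [integral_rpow (Or.inl (by linarith))]
    rw [Real.zero_rpow (by linarith), sub_add_cancel, sub_zero]
  -- Mhat on [1,∞)
  have hMhat_big : ∀ τ : ℝ, 1 ≤ τ → Mhat τ = 1 / γ₂ + (τ ^ γ₁ - 1) / γ₁ := by
    intro τ hτ
    rw [hMhat τ (by linarith)]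
    rw [← intervalIntegral.integral_add_adjacent_intervals hint1 (hint2 τ hτ), I1]
    congr 1
    rw [intervalIntegral.integral_congr (g := fun z : ℝ => z ^ (γ₁ - 1))
      (by
        intro z hz
        rw [Set.uIcc_of_le hτ] at hz
        exact hM2 z hz.1)]
    rw [integral_rpow (Or.inl (by linarith))]
    rw [Real.one_rpow, sub_add_cancel]
  refine ⟨hcont, ?_, ?_⟩
  · -- part (ii)
    intro γ hγγ
    have hγ0 : (0:ℝ) < γ := by linarith
    set C : ℝ := γ * (γ₂ - γ₁) / (γ₂ * (γ - γ₁)) with hC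
    refine ⟨max 1 C, le_max_left _ _, ?_⟩
    intro τ hτ
    have hτ1 : 1 ≤ τ := le_trans (le_max_left _ _) hτ
    have hτ0 : 0 < τ := by linarith
    have hτC : C ≤ τ := le_trans (le_max_right _ _) hτ
    have hpow : τ ≤ τ ^ γ₁ := by
      calc τ = τ ^ (1:ℝ) := (Real.rpow_one τ).symm
        _ ≤ τ ^ γ₁ := Real.rpow_le_rpow_of_exponent_le hτ1 hγ₁.le
    have hCa : C ≤ τ ^ γ₁ := le_trans hτC hpow
    rw [hM2 τ hτ1, hMhat_big τ hτ1]
    have hmul : τ * τ ^ (γ₁ - 1) = τ ^ γ₁ := by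
      nth_rewrite 1 [← Real.rpow_one τ]
      rw [← Real.rpow_add hτ0]
      norm_num
    rw [hmul]
    have hne₁ : γ₁ ≠ 0 := ne_of_gt hγ₁0
    have hne₂ : γ₂ ≠ 0 := ne_of_gt hγ₂0
    have hne₃ : γ - γ₁ ≠ 0 := ne_of_gt (by linarith)
    have key : (γ - γ₁) * C = γ * (γ₂ - γ₁) / γ₂ := by
      rw [hC, eq_div_iff hne₂]
      field_simp
    have h1' : γ * (γ₂ - γ₁) / γ₂ ≤ (γ - γ₁) * τ ^ γ₁ := by
      rw [← key]
      exact mul_le_mul_of_nonneg_left hCa (by linarith)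
    rw [div_le_iff₀ hγ₂0] at h1'
    rw [← sub_nonneg]
    have expand : γ * (1 / γ₂ + (τ ^ γ₁ - 1) / γ₁) - τ ^ γ₁ =
        ((γ - γ₁) * τ ^ γ₁ * γ₂ - γ * (γ₂ - γ₁)) / (γ₁ * γ₂) := by
      field_simp
      ring
    rw [expand]
    apply div_nonneg _ (by positivity)
    linarith
  · -- part (iii)
    intro γ hγγ τ hτ0 hτ1
    rw [hM1 τ hτ0.le hτ1, hMhat_small τ hτ0 hτ1]
    have hmul : τ * τ ^ (γ₂ - 1) = τ ^ γ₂ := by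
      nth_rewrite 1 [← Real.rpow_one τ]
      rw [← Real.rpow_add hτ0]
      norm_num
    rw [hmul]
    have hpos : 0 < τ ^ γ₂ := Real.rpow_pos_of_pos hτ0 γ₂
    rw [div_eq_mul_inv, ← mul_assoc, mul_comm γ (τ ^ γ₂), mul_assoc]
    nth_rewrite 2 [← mul_one (τ ^ γ₂)]
    apply mul_lt_mul_of_pos_left _ hpos
    rw [← div_eq_mul_inv, div_lt_one hγ₂0]
    exact hγγ
end
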